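/- Let M be a diagonalizable n×n matrix over a field K whose characteristic polynomial has n distinct roots in its splitting field L, and suppose the Galois group Gal(L/K), viewed as a permutation group on the roots, is m-homogeneous (for every pair of m-element subsets S, S' of the roots there is a group element mapping S onto S'). Then every m×m minor of the eigenvector matrix U of M is nonzero. -/

import Mathlib

lemma aux_exists_li {L : Type*} [Field L] {m n : ℕ} (v : Fin n → (Fin m → L))
    (hsp : Submodule.span L (Set.range v) = ⊤) :
    ∃ s : Fin m → Fin n, Function.Injective s ∧ LinearIndependent L (v ∘ s) := by
  obtain ⟨b, hbsub, hbspan, hbli⟩ := exists_linearIndependent L (Set.range v)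
  have hspanb : Submodule.span L b = ⊤ := by rw [hbspan, hsp]
  have hfin : b.Finite := hbli.setFinite
  haveI := hfin.fintype
  let B : Module.Basis b L (Fin m → L) := Module.Basis.mk hbli
    (by rw [Subtype.range_coe, hspanb])
  have hcard : Fintype.card b = m := by
    have h1 := Module.finrank_eq_card_basis B
    rw [Module.finrank_fin_fun] at h1
    omega
  let e : Fin m ≃ b := (Fintype.equivFinOfCardEq hcard).symm
  choose f hf using fun (x : b) => Set.mem_range.mp (hbsub x.2)
  refine ⟨fun i => f (e i), ?_, ?_⟩
  · intro i j hij
    apply e.injective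
    apply Subtype.ext
    rw [← hf (e i), ← hf (e j)]
    simp only [hij]
  · have hcomp : v ∘ (fun i => f (e i)) = (fun x : b => (x : Fin m → L)) ∘ e := by
      funext i
      simp [Function.comp, hf]
    rw [hcomp]
    exact hbli.comp e e.injective

/-- If the Galois group (acting on the distinct eigenvalues) is `m`-homogeneous,
then every `m × m` minor of the eigenvector matrix `U` is nonzero. -/
theorem stmt_1 {K L : Type*} [Field K] [Field L] [DecidableEq L] [Algebra K L] {n m : ℕ}
    (hm1 : 1 ≤ m) (hmn : m ≤ n)
    (M : Matrix (Fin n) (Fin n) K) (lam : Fin n → L) (U : Matrix (Fin n) (Fin n) L)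
    (hdist : Function.Injective lam)
    (hUinv : IsUnit U.det)
    (heig : ∀ i, (M.map (algebraMap K L)).mulVec (fun v => U v i) = lam i • (fun v => U v i))
    (hhom : ∀ S S' : Finset (Fin n), S.card = m → S'.card = m →
      ∃ g : L ≃ₐ[K] L, (S.image lam).image g = S'.image lam) :
    ∀ w s : Fin m → Fin n, Function.Injective w → Function.Injective s →
      (U.submatrix w s).det ≠ 0 := by
  have hUU : IsUnit U := (Matrix.isUnit_iff_isUnit_det U).2 hUinv
  have hsurj : Function.Surjective U.mulVec := Matrix.mulVec_surjective_iff_isUnit.2 hUU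
  have hinj : Function.Injective U.mulVec := Matrix.mulVec_injective_iff_isUnit.2 hUU
  have hcols : LinearIndependent L (fun j => U.transpose j) :=
    Matrix.linearIndependent_cols_iff_isUnit.2 hUU
  have hcolne : ∀ j : Fin n, (fun a => U a j) ≠ 0 := by
    intro j hj
    exact hcols.ne_zero j (by funext a; exact congrFun hj a)
  -- M' * U = U * diagonal lam
  have Meq : (M.map (algebraMap K L)) * U = U * Matrix.diagonal lam := by
    ext a b
    have h := congrFun (heig b) a
    simp only [Matrix.mulVec, dotProduct, Pi.smul_apply, smul_eq_mul] at h
    rw [Matrix.mul_apply, Matrix.mul_diagonal]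
    rw [h, mul_comm]
  -- uniqueness of eigenvectors
  have key : ∀ (v : Fin n → L) (i : Fin n), v ≠ 0 →
      (M.map (algebraMap K L)).mulVec v = lam i • v →
      ∃ c : L, c ≠ 0 ∧ v = c • (fun a => U a i) := by
    intro v i hv hev
    obtain ⟨x, hx⟩ := hsurj v
    have h1 : U.mulVec ((Matrix.diagonal lam).mulVec x) = U.mulVec (lam i • x) := by
      rw [Matrix.mulVec_mulVec, ← Meq, ← Matrix.mulVec_mulVec, hx, hev,
        Matrix.mulVec_smul, hx]
    have h2 := hinj h1
    have h3 : ∀ k, k ≠ i → x k = 0 := by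
      intro k hk
      have := congrFun h2 k
      simp only [Matrix.mulVec_diagonal, Pi.smul_apply, smul_eq_mul] at this
      have hne : lam k - lam i ≠ 0 := sub_ne_zero.2 (fun h => hk (hdist h))
      have : (lam k - lam i) * x k = 0 := by ring_nf; linear_combination this
      rcases mul_eq_zero.mp this with h | h
      · exact absurd h hne
      · exact h
    have hxv : v = x i • (fun a => U a i) := by
      funext a
      rw [← hx]
      simp only [Matrix.mulVec, dotProduct, Pi.smul_apply, smul_eq_mul]
      rw [Finset.sum_eq_single i]
      · ring
      · intro k _ hk; rw [h3 k hk, mul_zero]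
      · intro h; exact absurd (Finset.mem_univ i) h
    refine ⟨x i, ?_, hxv⟩
    intro h0
    apply hv
    rw [hxv, h0, zero_smul]
  intro w s hw hs
  by_contra hdet
  -- Claim A: all minors with rows w vanish
  have claimA : ∀ s' : Fin m → Fin n, Function.Injective s' → (U.submatrix w s').det = 0 := by
    intro s' hs'
    set S : Finset (Fin n) := Finset.image s Finset.univ with hS
    set S' : Finset (Fin n) := Finset.image s' Finset.univ with hS'
    have hScard : S.card = m := by
      rw [hS, Finset.card_image_of_injective _ hs, Finset.card_univ, Fintype.card_fin]
    have hS'card : S'.card = m := by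
      rw [hS', Finset.card_image_of_injective _ hs', Finset.card_univ, Fintype.card_fin]
    obtain ⟨σ, hσ⟩ := hhom S S' hScard hS'card
    -- for each i, σ (lam (s i)) = lam (s' (p i)) for some p i
    have hex : ∀ i : Fin m, ∃ i' : Fin m, σ (lam (s i)) = lam (s' i') := by
      intro i
      have hmem : σ (lam (s i)) ∈ S'.image lam := by
        rw [← hσ]
        exact Finset.mem_image_of_mem _ (Finset.mem_image_of_mem _
          (Finset.mem_image_of_mem _ (Finset.mem_univ i)))
      obtain ⟨j, hj, hje⟩ := Finset.mem_image.mp hmem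
      obtain ⟨i', _, hi'⟩ := Finset.mem_image.mp hj
      exact ⟨i', by rw [hje.symm, hi']⟩
    choose p hp using hex
    have hpinj : Function.Injective p := by
      intro i j hij
      apply hs; apply hdist
      apply σ.injective
      rw [hp i, hp j, hij]
    have hpbij : Function.Bijective p := (Finite.injective_iff_bijective).1 hpinj
    let e : Equiv.Perm (Fin m) := Equiv.ofBijective p hpbij
    -- Galois-transformed columns are scalar multiples
    have hc : ∀ i : Fin m, ∃ c : L, c ≠ 0 ∧
        (fun a => σ (U a (s i))) = c • (fun a => U a (s' (p i))) := by
      intro i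
      apply key
      · intro h0
        apply hcolne (s i)
        funext a
        have := congrFun h0 a
        simp only [Pi.zero_apply] at this ⊢
        exact σ.injective (by rw [this, map_zero])
      · funext a
        simp only [Matrix.mulVec, dotProduct, Pi.smul_apply, smul_eq_mul,
          Matrix.map_apply]
        rw [← hp i]
        have h := congrFun (heig (s i)) a
        simp only [Matrix.mulVec, dotProduct, Pi.smul_apply, smul_eq_mul,
          Matrix.map_apply] at h
        calc ∑ j, algebraMap K L (M a j) * σ (U j (s i))
            = σ (∑ j, algebraMap K L (M a j) * U j (s i)) := by
              rw [map_sum]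
              congr 1; funext j
              rw [map_mul, AlgEquiv.commutes]
          _ = σ (lam (s i) * U a (s i)) := by rw [h]
          _ = σ (lam (s i)) * σ (U a (s i)) := map_mul σ _ _
    choose c hc0 hceq using hc
    -- determinant computation
    have hV : ((U.submatrix w s).map σ) = (U.submatrix w (fun j => s' (p j))) * Matrix.diagonal c := by
      ext a b
      rw [Matrix.mul_diagonal]
      simp only [Matrix.map_apply, Matrix.submatrix_apply]
      have := congrFun (hceq b) (w a)
      simp only [Pi.smul_apply, smul_eq_mul] at this
      rw [this, mul_comm]
    have hdetV : ((U.submatrix w s).map σ).det = 0 := by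
      have h2 := RingHom.map_det (σ : L →+* L) (U.submatrix w s)
      rw [hdet, map_zero] at h2
      have h3 : (U.submatrix w s).map σ = (σ : L →+* L).mapMatrix (U.submatrix w s) := rfl
      rw [h3, ← h2]
    rw [hV, Matrix.det_mul, Matrix.det_diagonal] at hdetV
    have hprod : ∏ i, c i ≠ 0 := Finset.prod_ne_zero_iff.2 (fun i _ => hc0 i)
    have hdet2 : (U.submatrix w (fun j => s' (p j))).det = 0 := by
      rcases mul_eq_zero.mp hdetV with h | h
      · exact h
      · exact absurd h hprod
    have hsub : U.submatrix w (fun j => s' (p j)) = (U.submatrix w s').submatrix id e := by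
      ext a b
      simp [Matrix.submatrix_apply, e, Equiv.ofBijective]
    rw [hsub, Matrix.det_permute'] at hdet2
    rcases mul_eq_zero.mp hdet2 with h | h
    · exfalso
      have : ((Equiv.Perm.sign e : ℤˣ) : L) ≠ 0 := by
        rcases Int.units_eq_one_or (Equiv.Perm.sign e) with h1 | h1 <;> simp [h1]
      exact this h
    · exact h
  -- columns of the row-submatrix span everything
  have hspan : Submodule.span L (Set.range (fun j : Fin n => (fun i : Fin m => U (w i) j))) = ⊤ := by
    rw [Submodule.eq_top_iff']
    intro y
    classical
    let Y : Fin n → L := fun a => if h : ∃ i, w i = a then y h.choose else 0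
    have hY : ∀ i, Y (w i) = y i := by
      intro i
      have hex : ∃ j, w j = w i := ⟨i, rfl⟩
      have : hex.choose = i := hw hex.choose_spec
      simp only [Y, dif_pos hex, this]
    obtain ⟨x, hx⟩ := hsurj Y
    have hy : y = ∑ j, x j • (fun i : Fin m => U (w i) j) := by
      funext i
      rw [← hY i, ← hx]
      simp only [Matrix.mulVec, dotProduct, Finset.sum_apply, Pi.smul_apply,
        smul_eq_mul]
      congr 1; funext j; ring
    rw [hy]
    exact Submodule.sum_smul_mem _ _ (fun j _ => Submodule.subset_span ⟨j, rfl⟩)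
  obtain ⟨s0, hs0inj, hs0li⟩ := aux_exists_li _ hspan
  have : IsUnit (U.submatrix w s0) := by
    apply Matrix.linearIndependent_cols_iff_isUnit.1
    convert hs0li using 1
    funext j i; rfl
  have hne : (U.submatrix w s0).det ≠ 0 :=
    ((Matrix.isUnit_iff_isUnit_det _).1 this).ne_zero
  exact hne (claimA s0 hs0inj)
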